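/- Every prime ideal of ℂ[x,y] is either a maximal ideal, or a principal ideal generated by an irreducible polynomial, or the zero ideal. -/

import Mathlib

open Polynomial

set_option maxHeartbeats 1000000
set_option synthInstance.maxHeartbeats 1000000



noncomputable def phi2 : MvPolynomial (Fin 2) ℂ ≃ₐ[ℂ] Polynomial (Polynomial ℂ) :=
  (MvPolynomial.finSuccEquiv ℂ 1).trans
    (Polynomial.mapAlgEquiv ((MvPolynomial.finSuccEquiv ℂ 0).trans
      (Polynomial.mapAlgEquiv (MvPolynomial.isEmptyAlgEquiv ℂ (Fin 0)))))

lemma phi2_X1 : phi2 (MvPolynomial.X 1) = Polynomial.C Polynomial.X := by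
  have h : (1 : Fin 2) = Fin.succ 0 := rfl
  rw [phi2, h]
  simp only [AlgEquiv.trans_apply, MvPolynomial.finSuccEquiv_X_succ,
    Polynomial.coe_mapAlgEquiv, Polynomial.map_C, RingHom.coe_coe, AlgEquiv.trans_apply,
    MvPolynomial.finSuccEquiv_X_zero, Polynomial.map_X]

lemma phi2_C (a : ℂ) : phi2 (MvPolynomial.C a) = Polynomial.C (Polynomial.C a) := by
  have := phi2.commutes a
  simpa using this

lemma phi2_aeval (u : Polynomial ℂ) :
    phi2 ((Polynomial.aeval (MvPolynomial.X (1 : Fin 2))) u) = Polynomial.C u := by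
  induction u using Polynomial.induction_on' with
  | add p q hp hq => simp [hp, hq]
  | monomial n a =>
      rw [← Polynomial.C_mul_X_pow_eq_monomial]
      simp only [map_mul, map_pow, Polynomial.aeval_C, Polynomial.aeval_X]
      rw [phi2_X1]
      have h2 : phi2 ((algebraMap ℂ (MvPolynomial (Fin 2) ℂ)) a) = Polynomial.C (Polynomial.C a) := by
        rw [show (algebraMap ℂ (MvPolynomial (Fin 2) ℂ)) a = MvPolynomial.C a from rfl, phi2_C]
      rw [h2, ← Polynomial.C_pow, ← Polynomial.C_mul]

lemma key_univ (P : Ideal (MvPolynomial (Fin 2) ℂ)) (hP : P.IsPrime)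
    (f g : MvPolynomial (Fin 2) ℂ) (hf : Irreducible f) (hfP : f ∈ P) (hgP : g ∈ P)
    (hfg : ¬ f ∣ g) :
    ∃ u : Polynomial ℂ, u ≠ 0 ∧ Polynomial.aeval (MvPolynomial.X (1 : Fin 2)) u ∈ P := by
  classical
  haveI : IsPrincipalIdealRing (Polynomial (FractionRing (Polynomial ℂ))) :=
    @EuclideanDomain.to_principal_ideal_domain _ Polynomial.instEuclideanDomain
  set f' : Polynomial (Polynomial ℂ) := phi2 f with hf'def
  set g' : Polynomial (Polynomial ℂ) := phi2 g with hg'def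
  have hf' : Irreducible f' :=
    (MulEquiv.irreducible_iff (phi2 : MvPolynomial (Fin 2) ℂ ≃* Polynomial (Polynomial ℂ))).mpr hf
  have hfg' : ¬ f' ∣ g' := fun h =>
    hfg ((map_dvd_iff (phi2 : MvPolynomial (Fin 2) ℂ ≃* Polynomial (Polynomial ℂ))).mp h)
  have hsymm : ∀ u : Polynomial ℂ,
      Polynomial.aeval (MvPolynomial.X (1 : Fin 2)) u = phi2.symm (Polynomial.C u) := by
    intro u; rw [← phi2_aeval u, AlgEquiv.symm_apply_apply]
  by_cases h0 : f'.natDegree = 0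
  · obtain ⟨c, hc⟩ := Polynomial.natDegree_eq_zero.mp h0
    refine ⟨c, ?_, ?_⟩
    · rintro rfl; simp at hc; exact hf'.ne_zero hc.symm
    · rw [hsymm, hc]
      have : phi2.symm f' = f := phi2.symm_apply_apply f
      rw [this]; exact hfP
  · have hf'ne : f' ≠ 0 := hf'.ne_zero
    have hprim : f'.IsPrimitive := by
      intro r hr
      obtain ⟨u, hu⟩ := hr
      rcases hf'.isUnit_or_isUnit hu with h | h
      · exact Polynomial.isUnit_C.mp h
      · exfalso
        apply h0
        have hC : (Polynomial.C r : Polynomial (Polynomial ℂ)) ≠ 0 := fun hh =>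
          hf'ne (by rw [hu, hh, zero_mul])
        rw [hu, Polynomial.natDegree_mul hC h.ne_zero, Polynomial.natDegree_C,
          Polynomial.natDegree_eq_zero_of_isUnit h]
    have hinj : Function.Injective (algebraMap (Polynomial ℂ) (FractionRing (Polynomial ℂ))) :=
      IsFractionRing.injective (Polynomial ℂ) (FractionRing (Polynomial ℂ))
    set f'' : Polynomial (FractionRing (Polynomial ℂ)) :=
      f'.map (algebraMap (Polynomial ℂ) (FractionRing (Polynomial ℂ))) with hf''def
    set g'' : Polynomial (FractionRing (Polynomial ℂ)) :=
      g'.map (algebraMap (Polynomial ℂ) (FractionRing (Polynomial ℂ))) with hg''def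
    have hf'' : Irreducible f'' :=
      (hprim.irreducible_iff_irreducible_map_fraction_map).mp hf'
    have hg'ne : g' ≠ 0 := by
      rintro hg0
      exact hfg' (hg0 ▸ dvd_zero f')
    have hnd : ¬ f'' ∣ g'' := by
      intro hdvd
      apply hfg'
      have hcont : g'.content ≠ 0 := fun h => hg'ne (Polynomial.content_eq_zero_iff.mp h)
      have hu : IsUnit (Polynomial.C ((algebraMap (Polynomial ℂ) (FractionRing (Polynomial ℂ))) g'.content)) :=
        Polynomial.isUnit_C.mpr ((IsFractionRing.to_map_ne_zero_of_mem_nonZeroDivisors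
          (mem_nonZeroDivisors_of_ne_zero hcont)).isUnit)
      have hsplit : g'' = Polynomial.C ((algebraMap (Polynomial ℂ) (FractionRing (Polynomial ℂ))) g'.content)
          * g'.primPart.map (algebraMap (Polynomial ℂ) (FractionRing (Polynomial ℂ))) := by
        rw [hg''def, ← Polynomial.map_C, ← Polynomial.map_mul, ← Polynomial.eq_C_content_mul_primPart]
      rw [hsplit, hu.dvd_mul_left] at hdvd
      exact (hprim.dvd_of_fraction_map_dvd_fraction_map hdvd).trans
        g'.primPart_dvd
    have hcop : IsCoprime f'' g'' := (hf''.coprime_iff_not_dvd).mpr hnd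
    obtain ⟨a, b, hab⟩ := hcop
    obtain ⟨s, hs⟩ := IsLocalization.integerNormalization_map_to_map (nonZeroDivisors (Polynomial ℂ)) a
    obtain ⟨t, ht⟩ := IsLocalization.integerNormalization_map_to_map (nonZeroDivisors (Polynomial ℂ)) b
    set Na := IsLocalization.integerNormalization (nonZeroDivisors (Polynomial ℂ)) a
    set Nb := IsLocalization.integerNormalization (nonZeroDivisors (Polynomial ℂ)) b
    set w : Polynomial (Polynomial ℂ) :=
      Polynomial.C t.1 * Na * f' + Polynomial.C s.1 * Nb * g' with hwdef
    have hsmul : ∀ (c : Polynomial ℂ) (p : Polynomial (FractionRing (Polynomial ℂ))),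
        (c • p) = Polynomial.C ((algebraMap (Polynomial ℂ) (FractionRing (Polynomial ℂ))) c) * p := by
      intro c p
      rw [← algebraMap_smul (FractionRing (Polynomial ℂ)) c p, Polynomial.smul_eq_C_mul]
    have hwmap : w.map (algebraMap (Polynomial ℂ) (FractionRing (Polynomial ℂ)))
        = Polynomial.C ((algebraMap (Polynomial ℂ) (FractionRing (Polynomial ℂ))) (t.1 * s.1)) := by
      have step : w.map (algebraMap (Polynomial ℂ) (FractionRing (Polynomial ℂ)))
          = Polynomial.C ((algebraMap (Polynomial ℂ) (FractionRing (Polynomial ℂ))) t.1)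
            * Polynomial.C ((algebraMap (Polynomial ℂ) (FractionRing (Polynomial ℂ))) s.1)
            * (a * f'' + b * g'') := by
        rw [hwdef, Polynomial.map_add, Polynomial.map_mul, Polynomial.map_mul, Polynomial.map_mul,
          Polynomial.map_mul, Polynomial.map_C, Polynomial.map_C, hs, ht, hsmul, hsmul,
          ← hf''def, ← hg''def]
        ring
      rw [step, hab, mul_one, ← Polynomial.C_mul, ← map_mul]
    have hts : (algebraMap (Polynomial ℂ) (FractionRing (Polynomial ℂ))) (t.1 * s.1) ≠ 0 :=
      IsFractionRing.to_map_ne_zero_of_mem_nonZeroDivisors (mul_mem t.2 s.2)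
    have hwne : w ≠ 0 := by
      intro h
      rw [h, Polynomial.map_zero] at hwmap
      exact hts (by simpa using hwmap.symm)
    have hdeg : w.natDegree = 0 := by
      have h1 := Polynomial.natDegree_map_eq_of_injective hinj w
      rw [hwmap, Polynomial.natDegree_C] at h1
      exact h1.symm
    obtain ⟨d, hd⟩ := Polynomial.natDegree_eq_zero.mp hdeg
    have hdne : d ≠ 0 := by rintro rfl; rw [map_zero] at hd; exact hwne hd.symm
    refine ⟨d, hdne, ?_⟩
    rw [hsymm, hd]
    have hsw : phi2.symm w = (phi2.symm (Polynomial.C t.1) * phi2.symm Na) * f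
        + (phi2.symm (Polynomial.C s.1) * phi2.symm Nb) * g := by
      rw [hwdef]
      simp only [map_add, map_mul, hf'def, hg'def, AlgEquiv.symm_apply_apply]
    rw [hsw]
    exact Ideal.add_mem P (Ideal.mul_mem_left P _ hfP) (Ideal.mul_mem_left P _ hgP)


lemma root_mem (P : Ideal (MvPolynomial (Fin 2) ℂ)) (hP : P.IsPrime) (i : Fin 2)
    (u : Polynomial ℂ) (hu : u ≠ 0) (hmem : Polynomial.aeval (MvPolynomial.X i) u ∈ P) :
    ∃ a : ℂ, MvPolynomial.X i - MvPolynomial.C a ∈ P := by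
  have hsplit : u.Splits := IsAlgClosed.splits u
  have hu2 := hsplit.eq_prod_roots
  rw [hu2] at hmem
  rw [map_mul, map_multiset_prod, Multiset.map_map] at hmem
  have heval : ∀ a : ℂ, (Polynomial.aeval (MvPolynomial.X i : MvPolynomial (Fin 2) ℂ)) (Polynomial.X - Polynomial.C a)
      = MvPolynomial.X i - MvPolynomial.C a := by intro a; simp
  rcases hP.mem_or_mem hmem with h | h
  · exfalso
    have hlc0 : IsUnit (algebraMap ℂ (MvPolynomial (Fin 2) ℂ) u.leadingCoeff) := by
      apply IsUnit.map
      exact isUnit_iff_ne_zero.mpr (Polynomial.leadingCoeff_ne_zero.mpr hu)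
    have hlc : IsUnit ((Polynomial.aeval (MvPolynomial.X i : MvPolynomial (Fin 2) ℂ))
        (Polynomial.C u.leadingCoeff)) := by
      rw [Polynomial.aeval_C]; exact hlc0
    exact hP.ne_top (Ideal.eq_top_of_isUnit_mem P h hlc)
  · obtain ⟨z, hz, hzP⟩ := (hP.multiset_prod_mem_iff_exists_mem _).mp h
    obtain ⟨a, _, ha⟩ := Multiset.mem_map.mp hz
    refine ⟨a, ?_⟩
    rw [← ha] at hzP
    simpa [heval] using hzP

lemma max_of_two (P : Ideal (MvPolynomial (Fin 2) ℂ)) (hP : P.IsPrime) (a b : ℂ)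
    (ha : MvPolynomial.X 0 - MvPolynomial.C a ∈ P)
    (hb : MvPolynomial.X 1 - MvPolynomial.C b ∈ P) : P.IsMaximal := by
  classical
  set pt : Fin 2 → ℂ := ![a, b] with hpt
  set S : Ideal (MvPolynomial (Fin 2) ℂ) :=
    Ideal.span {MvPolynomial.X 0 - MvPolynomial.C a, MvPolynomial.X 1 - MvPolynomial.C b} with hS
  have hSP : S ≤ P := by
    rw [hS, Ideal.span_le]
    rintro z (rfl | rfl)
    · exact ha
    · simp_all
  have hgen : ∀ i : Fin 2, MvPolynomial.X i - MvPolynomial.C (pt i) ∈ S := by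
    intro i
    fin_cases i
    · simpa [hpt] using Ideal.subset_span (by simp : (MvPolynomial.X 0 - MvPolynomial.C a : MvPolynomial (Fin 2) ℂ) ∈ _)
    · simpa [hpt] using Ideal.subset_span (by simp : (MvPolynomial.X 1 - MvPolynomial.C b : MvPolynomial (Fin 2) ℂ) ∈ _)
  have claim : ∀ p : MvPolynomial (Fin 2) ℂ,
      Ideal.Quotient.mk S p = Ideal.Quotient.mk S (MvPolynomial.C (MvPolynomial.eval pt p)) := by
    intro p
    induction p using MvPolynomial.induction_on with
    | C c => simp
    | add p q hp hq =>
        rw [map_add, hp, hq, ← map_add, show (MvPolynomial.eval pt) (p + q)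
          = (MvPolynomial.eval pt p) + (MvPolynomial.eval pt q) from map_add _ _ _,
          MvPolynomial.C_add]
    | mul_X p i hp =>
        have hXi : Ideal.Quotient.mk S (MvPolynomial.X i) =
            Ideal.Quotient.mk S (MvPolynomial.C (pt i)) :=
          Ideal.Quotient.eq.mpr (hgen i)
        rw [map_mul, hp, hXi, ← map_mul, ← MvPolynomial.C_mul,
          show (MvPolynomial.eval pt) (p * MvPolynomial.X i)
            = (MvPolynomial.eval pt p) * pt i by simp]
  have hle : MvPolynomial.vanishingIdeal ℂ {pt} ≤ P := by
    intro p hp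
    have h0 : MvPolynomial.eval pt p = 0 :=
      (MvPolynomial.mem_vanishingIdeal_singleton_iff pt p).mp hp
    apply hSP
    apply (Ideal.Quotient.eq_zero_iff_mem).mp
    rw [claim p, h0, map_zero, map_zero]
  have heq := (inferInstance : (MvPolynomial.vanishingIdeal ℂ {pt} : Ideal (MvPolynomial (Fin 2) ℂ)).IsMaximal).eq_of_le hP.ne_top hle
  rw [← heq]
  exact inferInstance

lemma key_univ0 (P : Ideal (MvPolynomial (Fin 2) ℂ)) (hP : P.IsPrime)
    (f g : MvPolynomial (Fin 2) ℂ) (hf : Irreducible f) (hfP : f ∈ P) (hgP : g ∈ P)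
    (hfg : ¬ f ∣ g) :
    ∃ u : Polynomial ℂ, u ≠ 0 ∧ Polynomial.aeval (MvPolynomial.X (0 : Fin 2)) u ∈ P := by
  set σ : MvPolynomial (Fin 2) ℂ ≃ₐ[ℂ] MvPolynomial (Fin 2) ℂ :=
    MvPolynomial.renameEquiv ℂ (Equiv.swap (0 : Fin 2) 1) with hσ
  set P' : Ideal (MvPolynomial (Fin 2) ℂ) := P.comap σ.toAlgHom.toRingHom with hP'
  have hmem' : ∀ z, z ∈ P' ↔ σ z ∈ P := fun z => Iff.rfl
  haveI hP'prime : P'.IsPrime := hP.comap σ.toAlgHom.toRingHom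
  have hff : Irreducible (σ.symm f) :=
    (MulEquiv.irreducible_iff (σ.symm : MvPolynomial (Fin 2) ℂ ≃* MvPolynomial (Fin 2) ℂ)).mpr hf
  have hfP' : σ.symm f ∈ P' := by rw [hmem', σ.apply_symm_apply]; exact hfP
  have hgP' : σ.symm g ∈ P' := by rw [hmem', σ.apply_symm_apply]; exact hgP
  have hfg' : ¬ σ.symm f ∣ σ.symm g := fun h =>
    hfg ((map_dvd_iff (σ.symm : MvPolynomial (Fin 2) ℂ ≃* MvPolynomial (Fin 2) ℂ)).mp h)
  obtain ⟨u, hu, huP⟩ := key_univ P' hP'prime (σ.symm f) (σ.symm g) hff hfP' hgP' hfg'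
  refine ⟨u, hu, ?_⟩
  have h1 : σ ((Polynomial.aeval (MvPolynomial.X (1 : Fin 2))) u)
      = (Polynomial.aeval (σ (MvPolynomial.X (1 : Fin 2)))) u :=
    (Polynomial.aeval_algHom_apply σ.toAlgHom (MvPolynomial.X 1) u).symm
  have h2 : σ (MvPolynomial.X (1 : Fin 2)) = MvPolynomial.X (0 : Fin 2) := by
    rw [hσ]
    simp [MvPolynomial.renameEquiv_apply, MvPolynomial.rename_X, Equiv.swap_apply_right]
  have := (hmem' _).mp huP
  rwa [h1, h2] at this

/-- Prime ideals of ℂ[x,y] are maximal ideals, principal ideals generated by an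
irreducible polynomial, or the zero ideal. -/
theorem stmt_18 (P : Ideal (MvPolynomial (Fin 2) ℂ)) (hP : P.IsPrime) :
    P.IsMaximal ∨ (∃ f : MvPolynomial (Fin 2) ℂ, Irreducible f ∧ P = Ideal.span {f}) ∨
      P = ⊥ := by
  by_cases hbot : P = ⊥
  · exact Or.inr (Or.inr hbot)
  · obtain ⟨p, hpP, hp⟩ := hP.exists_mem_prime_of_ne_bot hbot
    by_cases hspan : P = Ideal.span {p}
    · exact Or.inr (Or.inl ⟨p, hp.irreducible, hspan⟩)
    · left
      have hex : ∃ g ∈ P, ¬ p ∣ g := by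
        by_contra h
        push_neg at h
        apply hspan
        refine le_antisymm (fun g hg => Ideal.mem_span_singleton.mpr (h g hg)) ?_
        rw [Ideal.span_le, Set.singleton_subset_iff]
        exact hpP
      obtain ⟨g, hgP, hpg⟩ := hex
      obtain ⟨u, hu, huP⟩ := key_univ0 P hP p g hp.irreducible hpP hgP hpg
      obtain ⟨v, hv, hvP⟩ := key_univ P hP p g hp.irreducible hpP hgP hpg
      obtain ⟨a, haP⟩ := root_mem P hP 0 u hu huP
      obtain ⟨b, hbP⟩ := root_mem P hP 1 v hv hvP
      exact max_of_two P hP a b haP hbP
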